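/- Let μ be an ε-product distribution over X_1 × ... × X_r and let S_1, S_2, S_3 ⊆ [r] be three disjoint non-empty sets. Let T be the normalized adjacency operator of the tripartite graph T(S_1, S_2, S_3; μ). Then the second largest singular value of T is at most 1/2 + poly(r)·ε. -/

import Mathlib

open scoped Classical

/-- The restriction of a point `x ∈ ∏ X i` to the coordinates in `S`. -/
def restrict {r : ℕ} {X : Fin r → Type} (S : Finset (Fin r)) (x : ∀ i, X i) :
    ∀ i : S, X i.1 := fun i => x i.1

/-- The marginal mass of `μ` on the coordinates of `S` at the point `a`. -/
noncomputable def marg {r : ℕ} {X : Fin r → Type}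
    (μ : (∀ i, X i) → ℝ) (S : Finset (Fin r)) (a : ∀ i : S, X i.1) : ℝ :=
  ∑ᶠ x : ∀ i, X i, if restrict S x = a then μ x else 0

/-- The conditional distribution `μ | X_S = a`. -/
noncomputable def condDist {r : ℕ} {X : Fin r → Type}
    (μ : (∀ i, X i) → ℝ) (S : Finset (Fin r)) (a : ∀ i : S, X i.1) :
    (∀ i, X i) → ℝ :=
  fun x => if restrict S x = a then μ x / marg μ S a else 0

/-- The pair of coordinates `(i, j)` is `ε`-pseudorandom under `ν`: the second
singular value of the associated bipartite averaging operator is at most `ε`,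
expressed as a bilinear bound over pairs of mean-zero test functions. -/
def IsPseudorandomPair {r : ℕ} {X : Fin r → Type}
    (ν : (∀ i, X i) → ℝ) (i j : Fin r) (ε : ℝ) : Prop :=
  ∀ (f : X i → ℝ) (g : X j → ℝ),
    (∑ᶠ x : ∀ i, X i, ν x * f (x i)) = 0 →
    (∑ᶠ x : ∀ i, X i, ν x * g (x j)) = 0 →
    |∑ᶠ x : ∀ i, X i, ν x * f (x i) * g (x j)| ≤
      ε * Real.sqrt (∑ᶠ x : ∀ i, X i, ν x * (f (x i)) ^ 2) *
        Real.sqrt (∑ᶠ x : ∀ i, X i, ν x * (g (x j)) ^ 2)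

/-- `μ` is an `ε`-product distribution: every conditioning on at most `r − 2`
coordinates has `ε`-pseudorandom skeletons. -/
def IsEpsProduct {r : ℕ} (X : Fin r → Type) (μ : (∀ i, X i) → ℝ) (ε : ℝ) : Prop :=
  ∀ S : Finset (Fin r), S.card ≤ r - 2 →
    ∀ a : ∀ i : S, X i.1, marg μ S a ≠ 0 →
      ∀ i j : Fin r, i ∉ S → j ∉ S → i ≠ j →
        IsPseudorandomPair (condDist μ S a) i j ε

set_option linter.unusedSectionVars false
set_option linter.unusedVariables false

section Aux

variable {α : Type*} [Fintype α]

lemma wCS_sq (w f g : α → ℝ) (hw : ∀ x, 0 ≤ w x) :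
    (∑ x, w x * (f x * g x)) ^ 2 ≤ (∑ x, w x * f x ^ 2) * (∑ x, w x * g x ^ 2) := by
  have h := Finset.sum_mul_sq_le_sq_mul_sq Finset.univ
    (fun x => Real.sqrt (w x) * f x) (fun x => Real.sqrt (w x) * g x)
  have e1 : ∀ x : α, (Real.sqrt (w x) * f x) * (Real.sqrt (w x) * g x) = w x * (f x * g x) := by
    intro x
    linear_combination (f x * g x) * Real.sq_sqrt (hw x)
  have e2 : ∀ x : α, (Real.sqrt (w x) * f x) ^ 2 = w x * f x ^ 2 := by
    intro x
    linear_combination (f x ^ 2) * Real.sq_sqrt (hw x)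
  have e3 : ∀ x : α, (Real.sqrt (w x) * g x) ^ 2 = w x * g x ^ 2 := by
    intro x
    linear_combination (g x ^ 2) * Real.sq_sqrt (hw x)
  calc (∑ x, w x * (f x * g x)) ^ 2
      = (∑ x, (Real.sqrt (w x) * f x) * (Real.sqrt (w x) * g x)) ^ 2 := by
        rw [Finset.sum_congr rfl (fun x _ => (e1 x).symm)]
    _ ≤ (∑ x, (Real.sqrt (w x) * f x) ^ 2) * (∑ x, (Real.sqrt (w x) * g x) ^ 2) := h
    _ = _ := by
        rw [Finset.sum_congr rfl (fun x _ => e2 x), Finset.sum_congr rfl (fun x _ => e3 x)]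

lemma wCS_abs (w f g : α → ℝ) (hw : ∀ x, 0 ≤ w x) :
    |∑ x, w x * (f x * g x)| ≤
      Real.sqrt (∑ x, w x * f x ^ 2) * Real.sqrt (∑ x, w x * g x ^ 2) := by
  have h := wCS_sq w f g hw
  have hA : (0:ℝ) ≤ ∑ x, w x * f x ^ 2 :=
    Finset.sum_nonneg fun x _ => mul_nonneg (hw x) (sq_nonneg _)
  have := Real.sqrt_le_sqrt h
  rwa [Real.sqrt_sq_eq_abs, Real.sqrt_mul hA] at this

lemma mean_shift (w f : α → ℝ) (c : ℝ) (h1 : ∑ x, w x = 1)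
    (hc : ∑ x, w x * f x = c) :
    ∑ x, w x * (f x - c) ^ 2 ≤ ∑ x, w x * f x ^ 2 := by
  have e : ∀ x : α, w x * (f x - c) ^ 2
      = w x * f x ^ 2 - 2 * c * (w x * f x) + c ^ 2 * w x := by intro x; ring
  rw [Finset.sum_congr rfl (fun x _ => e x)]
  rw [Finset.sum_add_distrib, Finset.sum_sub_distrib, ← Finset.mul_sum, ← Finset.mul_sum]
  rw [h1, hc]
  nlinarith [sq_nonneg c]

lemma cov_decomp (w f g : α → ℝ) (cf cg : ℝ) (h1 : ∑ x, w x = 1)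
    (hf : ∑ x, w x * f x = cf) (hg : ∑ x, w x * g x = cg) :
    ∑ x, w x * (f x * g x) = cf * cg + ∑ x, w x * ((f x - cf) * (g x - cg)) := by
  have e : ∀ x : α, w x * ((f x - cf) * (g x - cg))
      = w x * (f x * g x) - cg * (w x * f x) - cf * (w x * g x) + cf * cg * w x := by
    intro x; ring
  rw [Finset.sum_congr rfl (fun x _ => e x)]
  rw [Finset.sum_add_distrib, Finset.sum_sub_distrib, Finset.sum_sub_distrib,
    ← Finset.mul_sum, ← Finset.mul_sum, ← Finset.mul_sum]
  rw [h1, hf, hg]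
  ring

end Aux

section Cond

variable {r : ℕ} {X : Fin r → Type} [∀ i, Fintype (X i)]

lemma marg_eq_sum (μ : (∀ i, X i) → ℝ) (S : Finset (Fin r)) (a : ∀ i : S, X i.1) :
    marg μ S a = ∑ x : ∀ i, X i, if restrict S x = a then μ x else 0 :=
  finsum_eq_sum_of_fintype _

lemma marg_nonneg {μ : (∀ i, X i) → ℝ} (hμ : ∀ x, 0 ≤ μ x) (S : Finset (Fin r))
    (a : ∀ i : S, X i.1) : 0 ≤ marg μ S a := by
  rw [marg_eq_sum]
  exact Finset.sum_nonneg fun x _ => by split <;> [exact hμ x; exact le_rfl]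

lemma le_marg {μ : (∀ i, X i) → ℝ} (hμ : ∀ x, 0 ≤ μ x) {S : Finset (Fin r)}
    {a : ∀ i : S, X i.1} {x : ∀ i, X i} (h : restrict S x = a) : μ x ≤ marg μ S a := by
  rw [marg_eq_sum]
  have := Finset.single_le_sum (f := fun y : ∀ i, X i => if restrict S y = a then μ y else 0)
    (fun y _ => by split <;> [exact hμ y; exact le_rfl]) (Finset.mem_univ x)
  simpa [h] using this

lemma mu_eq_zero_of_marg {μ : (∀ i, X i) → ℝ} (hμ : ∀ x, 0 ≤ μ x) {S : Finset (Fin r)}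
    {a : ∀ i : S, X i.1} {x : ∀ i, X i} (h : restrict S x = a) (hm : marg μ S a = 0) :
    μ x = 0 :=
  le_antisymm (hm ▸ le_marg hμ h) (hμ x)

lemma condDist_nonneg {μ : (∀ i, X i) → ℝ} (hμ : ∀ x, 0 ≤ μ x) (S : Finset (Fin r))
    (a : ∀ i : S, X i.1) (x : ∀ i, X i) : 0 ≤ condDist μ S a x := by
  unfold condDist
  split
  · exact div_nonneg (hμ x) (marg_nonneg hμ S a)
  · exact le_rfl

lemma condDist_zero_of_marg {μ : (∀ i, X i) → ℝ} {S : Finset (Fin r)}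
    {a : ∀ i : S, X i.1} (hm : marg μ S a = 0) (x : ∀ i, X i) : condDist μ S a x = 0 := by
  unfold condDist
  rw [hm]
  split <;> simp

lemma restrict_eq_of_condDist_ne_zero {μ : (∀ i, X i) → ℝ} {S : Finset (Fin r)}
    {a : ∀ i : S, X i.1} {x : ∀ i, X i} (h : condDist μ S a x ≠ 0) : restrict S x = a := by
  by_contra hc
  exact h (by unfold condDist; rw [if_neg hc])

lemma condDist_sum_one {μ : (∀ i, X i) → ℝ} {S : Finset (Fin r)}
    {a : ∀ i : S, X i.1} (hm : marg μ S a ≠ 0) :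
    ∑ x : ∀ i, X i, condDist μ S a x = 1 := by
  unfold condDist
  have : ∀ x : ∀ i, X i, (if restrict S x = a then μ x / marg μ S a else 0)
      = (if restrict S x = a then μ x else 0) / marg μ S a := by
    intro x; split <;> simp
  rw [Finset.sum_congr rfl (fun x _ => this x), ← Finset.sum_div, ← marg_eq_sum,
    div_self hm]

lemma sum_marg_cond {μ : (∀ i, X i) → ℝ} (hμ : ∀ x, 0 ≤ μ x) (S : Finset (Fin r))
    (x : ∀ i, X i) :
    ∑ V : ∀ i : S, X i.1, marg μ S V * condDist μ S V x = μ x := by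
  have e : ∀ V : ∀ i : S, X i.1, marg μ S V * condDist μ S V x
      = if restrict S x = V then μ x else 0 := by
    intro V
    unfold condDist
    rw [mul_ite, mul_zero]
    split
    · rename_i h
      by_cases hm : marg μ S V = 0
      · rw [hm, mu_eq_zero_of_marg hμ h hm]; simp
      · rw [mul_div_cancel₀ _ hm]
    · rfl
  rw [Finset.sum_congr rfl (fun V _ => e V)]
  simp

lemma total_exp {μ : (∀ i, X i) → ℝ} (hμ : ∀ x, 0 ≤ μ x) (S : Finset (Fin r))
    (φ : (∀ i, X i) → ℝ) :
    ∑ x : ∀ i, X i, μ x * φ x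
      = ∑ V : ∀ i : S, X i.1, marg μ S V * ∑ x : ∀ i, X i, condDist μ S V x * φ x := by
  have e : ∀ V : ∀ i : S, X i.1, marg μ S V * ∑ x : ∀ i, X i, condDist μ S V x * φ x
      = ∑ x : ∀ i, X i, (marg μ S V * condDist μ S V x) * φ x := by
    intro V
    rw [Finset.mul_sum]
    exact Finset.sum_congr rfl fun x _ => by ring
  rw [Finset.sum_congr rfl (fun V _ => e V), Finset.sum_comm]
  refine Finset.sum_congr rfl fun x _ => ?_
  rw [← Finset.sum_mul, sum_marg_cond hμ]

end Cond

section Glue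

variable {r : ℕ} {X : Fin r → Type} [∀ i, Fintype (X i)]

def glue (S T : Finset (Fin r)) (a : ∀ i : S, X i.1) (b : ∀ i : T, X i.1) :
    ∀ i : (S ∪ T : Finset (Fin r)), X i.1 := fun i =>
  if h : i.1 ∈ S then a ⟨i.1, h⟩ else b ⟨i.1, (Finset.mem_union.mp i.2).resolve_left h⟩

lemma restrict_glue_iff {S T : Finset (Fin r)} (hST : Disjoint S T) (x : ∀ i, X i)
    (a : ∀ i : S, X i.1) (b : ∀ i : T, X i.1) :
    restrict (S ∪ T) x = glue S T a b ↔ (restrict S x = a ∧ restrict T x = b) := by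
  constructor
  · intro h
    constructor
    · funext i
      have h2 := congrFun h ⟨i.1, Finset.mem_union_left _ i.2⟩
      have h3 : glue (X := X) S T a b ⟨i.1, Finset.mem_union_left _ i.2⟩ = a i := by
        simp only [glue, dif_pos i.2]
      rw [h3] at h2
      exact h2
    · funext i
      have hiS : i.1 ∉ S := fun hmem => (Finset.disjoint_left.mp hST hmem) i.2
      have h2 := congrFun h ⟨i.1, Finset.mem_union_right _ i.2⟩
      have h3 : glue (X := X) S T a b ⟨i.1, Finset.mem_union_right _ i.2⟩ = b i := by
        simp only [glue, dif_neg hiS]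
      rw [h3] at h2
      exact h2
  · rintro ⟨h1, h2⟩
    funext i
    show x i.1 = glue S T a b i
    unfold glue
    split
    · rename_i hs
      exact congrFun h1 ⟨i.1, hs⟩
    · rename_i hs
      exact congrFun h2 ⟨i.1, (Finset.mem_union.mp i.2).resolve_left hs⟩

lemma condDist_comp {μ : (∀ i, X i) → ℝ} (hμ : ∀ x, 0 ≤ μ x) {S T : Finset (Fin r)}
    (hST : Disjoint S T) (a : ∀ i : S, X i.1) (b : ∀ i : T, X i.1) :
    condDist (condDist μ S a) T b = condDist μ (S ∪ T) (glue S T a b) := by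
  have hm : marg (condDist μ S a) T b = marg μ (S ∪ T) (glue S T a b) / marg μ S a := by
    rw [marg_eq_sum, marg_eq_sum, Finset.sum_div]
    refine Finset.sum_congr rfl fun y _ => ?_
    simp only [restrict_glue_iff hST, condDist]
    by_cases h1 : restrict S y = a <;> by_cases h2 : restrict T y = b <;>
      simp [h1, h2]
  funext x
  have key : condDist (condDist μ S a) T b x
      = if restrict T x = b then
          condDist μ S a x / (marg μ (S ∪ T) (glue S T a b) / marg μ S a) else 0 := by
    show (if restrict T x = b then condDist μ S a x / marg (condDist μ S a) T b else 0) = _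
    rw [hm]
  rw [key]
  show _ = (if restrict (S ∪ T) x = glue S T a b then μ x / marg μ (S ∪ T) (glue S T a b) else 0)
  by_cases h2 : restrict T x = b
  · by_cases h1 : restrict S x = a
    · have hl : condDist μ S a x = μ x / marg μ S a := by
        unfold condDist; rw [if_pos h1]
      rw [if_pos h2, hl, if_pos ((restrict_glue_iff hST x a b).mpr ⟨h1, h2⟩)]
      by_cases hS0 : marg μ S a = 0
      · rw [hS0, mu_eq_zero_of_marg hμ h1 hS0]; simp
      · by_cases hU0 : marg μ (S ∪ T) (glue S T a b) = 0
        · rw [hU0]; simp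
        · field_simp
    · have hl : condDist μ S a x = 0 := by
        unfold condDist; rw [if_neg h1]
      rw [if_pos h2, hl, zero_div,
        if_neg (fun hc => h1 ((restrict_glue_iff hST x a b).mp hc).1)]
  · rw [if_neg h2, if_neg (fun hc => h2 ((restrict_glue_iff hST x a b).mp hc).2)]

end Glue

section Junta

variable {r : ℕ} {X : Fin r → Type} [∀ i, Fintype (X i)]

def Junta (L : Finset (Fin r)) (f : (∀ i, X i) → ℝ) : Prop :=
  ∀ x y : ∀ i, X i, (∀ i ∈ L, x i = y i) → f x = f y

lemma corr_triv (ν : (∀ i, X i) → ℝ) (c : ℝ) (hc : 0 ≤ c)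
    (f g : (∀ i, X i) → ℝ)
    (hconst : (∀ x y : ∀ i, X i, f x = f y) ∨ (∀ x y : ∀ i, X i, g x = g y))
    (hf0 : ∑ x : ∀ i, X i, ν x * f x = 0) (hg0 : ∑ x : ∀ i, X i, ν x * g x = 0) :
    |∑ x : ∀ i, X i, ν x * f x * g x| ≤
      c * Real.sqrt (∑ x : ∀ i, X i, ν x * f x ^ 2) *
        Real.sqrt (∑ x : ∀ i, X i, ν x * g x ^ 2) := by
  have hrhs : 0 ≤ c * Real.sqrt (∑ x : ∀ i, X i, ν x * f x ^ 2) *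
      Real.sqrt (∑ x : ∀ i, X i, ν x * g x ^ 2) :=
    mul_nonneg (mul_nonneg hc (Real.sqrt_nonneg _)) (Real.sqrt_nonneg _)
  rcases isEmpty_or_nonempty (∀ i, X i) with hE | hNE
  · simp only [Finset.univ_eq_empty, Finset.sum_empty, abs_zero, Real.sqrt_zero, mul_zero]
    exact le_rfl
  · obtain x₀ : ∀ i, X i := Classical.arbitrary _
    rcases hconst with hcf | hcg
    · have : ∑ x : ∀ i, X i, ν x * f x * g x = f x₀ * ∑ x : ∀ i, X i, ν x * g x := by
        rw [Finset.mul_sum]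
        exact Finset.sum_congr rfl fun x _ => by rw [hcf x x₀]; ring
      rw [this, hg0, mul_zero, abs_zero]
      exact hrhs
    · have : ∑ x : ∀ i, X i, ν x * f x * g x = g x₀ * ∑ x : ∀ i, X i, ν x * f x := by
        rw [Finset.mul_sum]
        exact Finset.sum_congr rfl fun x _ => by rw [hcg x x₀]; ring
      rw [this, hf0, mul_zero, abs_zero]
      exact hrhs

end Junta

section Step

variable {r : ℕ} {X : Fin r → Type} [∀ i, Fintype (X i)]

lemma corr_step (μ : (∀ i, X i) → ℝ) (hμ0 : ∀ x, 0 ≤ μ x) (ε : ℝ) (hε : 0 ≤ ε) (n : ℕ)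
    (ih : ∀ (S : Finset (Fin r)) (a : ∀ i : S, X i.1) (L R : Finset (Fin r))
      (f g : (∀ i, X i) → ℝ), L.card + R.card ≤ n → Disjoint L R → Disjoint S L →
      Disjoint S R → Junta L f → Junta R g →
      (∑ x : ∀ i, X i, condDist μ S a x * f x) = 0 →
      (∑ x : ∀ i, X i, condDist μ S a x * g x) = 0 →
      |∑ x : ∀ i, X i, condDist μ S a x * f x * g x| ≤
        (L.card : ℝ) * R.card * ε *
          Real.sqrt (∑ x : ∀ i, X i, condDist μ S a x * f x ^ 2) *
          Real.sqrt (∑ x : ∀ i, X i, condDist μ S a x * g x ^ 2))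
    (S : Finset (Fin r)) (a : ∀ i : S, X i.1) (L R : Finset (Fin r))
    (f g : (∀ i, X i) → ℝ) (hcard : L.card + R.card ≤ n + 1) (hR2 : 2 ≤ R.card)
    (hLR : Disjoint L R) (hSL : Disjoint S L) (hSR : Disjoint S R)
    (hfJ : Junta L f) (hgJ : Junta R g)
    (hf0 : ∑ x : ∀ i, X i, condDist μ S a x * f x = 0)
    (hg0 : ∑ x : ∀ i, X i, condDist μ S a x * g x = 0) :
    |∑ x : ∀ i, X i, condDist μ S a x * f x * g x| ≤
      (L.card : ℝ) * R.card * ε *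
        Real.sqrt (∑ x : ∀ i, X i, condDist μ S a x * f x ^ 2) *
        Real.sqrt (∑ x : ∀ i, X i, condDist μ S a x * g x ^ 2) := by
  obtain ⟨j, hj⟩ : R.Nonempty := Finset.card_pos.mp (by omega)
  have hν0 : ∀ x, 0 ≤ condDist μ S a x := condDist_nonneg hμ0 S a
  set R' := R.erase j with hR'def
  have hjR' : j ∉ R' := Finset.notMem_erase _ _
  have hR'R : R' ⊆ R := Finset.erase_subset _ _
  have hR'card1 : R'.card + 1 = R.card := by
    rw [hR'def, Finset.card_erase_of_mem hj]; omega
  have hjS : j ∉ S := Finset.disjoint_right.mp hSR hj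
  have hjL : j ∉ L := Finset.disjoint_right.mp hLR hj
  have hSR' : Disjoint S R' := Finset.disjoint_of_subset_right hR'R hSR
  have hR'L : Disjoint R' L := Finset.disjoint_of_subset_left hR'R hLR.symm
  have hSR'L : Disjoint (S ∪ R') L := Finset.disjoint_union_left.mpr ⟨hSL, hR'L⟩
  have hSR'j : Disjoint (S ∪ R') {j} := by
    rw [Finset.disjoint_singleton_right, Finset.mem_union]
    rintro (h | h) <;> [exact hjS h; exact hjR' h]
  have hLj : Disjoint L {j} := Finset.disjoint_singleton_right.mpr hjL
  set ν : (∀ i, X i) → ℝ := condDist μ S a with hν_def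
  set νV : (∀ i : R', X i.1) → (∀ i, X i) → ℝ := fun V => condDist ν R' V with hνV_def
  set m : (∀ i : R', X i.1) → ℝ := fun V => marg ν R' V with hm_def
  have hm0 : ∀ V, 0 ≤ m V := fun V => marg_nonneg hν0 R' V
  have hνV0 : ∀ V x, 0 ≤ νV V x := fun V x => condDist_nonneg hν0 R' V x
  have hcomp : ∀ V, νV V = condDist μ (S ∪ R') (glue S R' a V) :=
    fun V => condDist_comp hμ0 hSR' a V
  have hνVzero : ∀ V, m V = 0 → ∀ x, νV V x = 0 := fun V hm x =>
    condDist_zero_of_marg hm x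
  have hsum1 : ∀ V, m V ≠ 0 → ∑ x : ∀ i, X i, νV V x = 1 := fun V h => condDist_sum_one h
  have hsupp : ∀ V (x : ∀ i, X i), νV V x ≠ 0 → restrict R' x = V := fun V x h =>
    restrict_eq_of_condDist_ne_zero h
  have tA : ∀ φ : (∀ i, X i) → ℝ,
      ∑ x : ∀ i, X i, ν x * φ x = ∑ V, m V * ∑ x : ∀ i, X i, νV V x * φ x :=
    fun φ => total_exp hν0 R' φ
  set F : (∀ i : R', X i.1) → ℝ := fun V => ∑ x : ∀ i, X i, νV V x * f x with hF_def
  set G : (∀ i : R', X i.1) → ℝ := fun V => ∑ x : ∀ i, X i, νV V x * g x with hG_def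
  set gp : (∀ i : R', X i.1) → (∀ i, X i) → ℝ :=
    fun V x => g (fun i => if h : i ∈ R' then V ⟨i, h⟩ else x i) with hgp_def
  have hgp_eq : ∀ V (x : ∀ i, X i), restrict R' x = V → gp V x = g x := by
    intro V x h
    apply hgJ
    intro i _
    split
    · rename_i hiR'
      exact (congrFun h ⟨i, hiR'⟩).symm
    · rfl
  have hgp_pt : ∀ V (x : ∀ i, X i), νV V x * gp V x = νV V x * g x := by
    intro V x
    by_cases h : νV V x = 0
    · rw [h]; ring
    · rw [hgp_eq V x (hsupp V x h)]
  have hGgp : ∀ V, ∑ x : ∀ i, X i, νV V x * gp V x = G V :=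
    fun V => Finset.sum_congr rfl fun x _ => hgp_pt V x
  set Cov : (∀ i : R', X i.1) → ℝ :=
    fun V => ∑ x : ∀ i, X i, νV V x * ((f x - F V) * (gp V x - G V)) with hCov_def
  have idB : ∀ V, ∑ x : ∀ i, X i, νV V x * (f x * g x) = F V * G V + Cov V := by
    intro V
    by_cases hm : m V = 0
    · have hz := hνVzero V hm
      have hF0 : F V = 0 := by simp [hF_def, hz]
      have hG0 : G V = 0 := by simp [hG_def, hz]
      have hC0 : Cov V = 0 := by simp [hCov_def, hz]
      simp [hz, hF0, hG0, hC0]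
    · have h1 := hsum1 V hm
      have e1 : ∑ x : ∀ i, X i, νV V x * (f x * gp V x)
          = ∑ x : ∀ i, X i, νV V x * (f x * g x) := by
        refine Finset.sum_congr rfl fun x _ => ?_
        have h2 : νV V x * (f x * gp V x) = f x * (νV V x * gp V x) := by ring
        rw [h2, hgp_pt V x]; ring
      have hd := cov_decomp (νV V) f (gp V) (F V) (G V) h1 rfl (hGgp V)
      rw [e1] at hd
      exact hd
  have decomp : ∑ x : ∀ i, X i, ν x * (f x * g x)
      = (∑ V, m V * (F V * G V)) + ∑ V, m V * Cov V := by
    rw [tA (fun x => f x * g x),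
      Finset.sum_congr rfl fun V _ => by rw [idB V, mul_add]]
    exact Finset.sum_add_distrib
  set Ef := ∑ x : ∀ i, X i, ν x * f x ^ 2 with hEf_def
  set Eg := ∑ x : ∀ i, X i, ν x * g x ^ 2 with hEg_def
  have hEf0 : 0 ≤ Ef := Finset.sum_nonneg fun x _ => mul_nonneg (hν0 x) (sq_nonneg _)
  have hEg0 : 0 ≤ Eg := Finset.sum_nonneg fun x _ => mul_nonneg (hν0 x) (sq_nonneg _)
  have hEfV : Ef = ∑ V, m V * ∑ x : ∀ i, X i, νV V x * f x ^ 2 := tA _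
  have hEgV : Eg = ∑ V, m V * ∑ x : ∀ i, X i, νV V x * g x ^ 2 := tA _
  -- covariance bound per V
  have covV_bound : ∀ V, m V * |Cov V| ≤
      m V * ((L.card : ℝ) * ε *
        Real.sqrt (∑ x : ∀ i, X i, νV V x * f x ^ 2) *
        Real.sqrt (∑ x : ∀ i, X i, νV V x * g x ^ 2)) := by
    intro V
    by_cases hm : m V = 0
    · rw [hm, zero_mul, zero_mul]
    · have h1 := hsum1 V hm
      have hf0' : ∑ x : ∀ i, X i, νV V x * (f x - F V) = 0 := by
        have e : ∀ x : ∀ i, X i, νV V x * (f x - F V)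
            = νV V x * f x - F V * νV V x := fun x => by ring
        rw [Finset.sum_congr rfl fun x _ => e x, Finset.sum_sub_distrib,
          ← Finset.mul_sum, h1, mul_one]
        exact sub_self (F V)
      have hg0' : ∑ x : ∀ i, X i, νV V x * (gp V x - G V) = 0 := by
        have e : ∀ x : ∀ i, X i, νV V x * (gp V x - G V)
            = νV V x * gp V x - G V * νV V x := fun x => by ring
        rw [Finset.sum_congr rfl fun x _ => e x, Finset.sum_sub_distrib,
          ← Finset.mul_sum, h1, mul_one, hGgp V]
        exact sub_self (G V)
      have hf0'' := hf0'
      have hg0'' := hg0'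
      rw [show νV V = condDist μ (S ∪ R') (glue S R' a V) from hcomp V] at hf0'' hg0''
      have hfJ' : Junta L (fun x => f x - F V) := fun x y h => by
        dsimp only; rw [hfJ x y h]
      have hgJ' : Junta {j} (fun x => gp V x - G V) := by
        intro x y h
        have hxy : gp V x = gp V y := by
          apply hgJ
          intro i hi
          by_cases hiR' : i ∈ R'
          · rw [dif_pos hiR', dif_pos hiR']
          · rw [dif_neg hiR', dif_neg hiR']
            have hij : i = j := by
              by_contra hne
              exact hiR' (Finset.mem_erase.mpr ⟨hne, hi⟩)
            subst hij
            exact h i (Finset.mem_singleton_self i)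
        dsimp only; rw [hxy]
      have happ := ih (S ∪ R') (glue S R' a V) L {j}
        (fun x => f x - F V) (fun x => gp V x - G V)
        (by rw [Finset.card_singleton]; omega)
        hLj hSR'L hSR'j hfJ' hgJ' hf0'' hg0''
      rw [← hcomp V] at happ
      simp only [Finset.card_singleton, Nat.cast_one, mul_one] at happ
      have hassoc : Cov V = ∑ x : ∀ i, X i, νV V x * (f x - F V) * (gp V x - G V) :=
        Finset.sum_congr rfl fun x _ => (mul_assoc _ _ _).symm
      have b1 : ∑ x : ∀ i, X i, νV V x * (f x - F V) ^ 2
          ≤ ∑ x : ∀ i, X i, νV V x * f x ^ 2 :=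
        mean_shift (νV V) f (F V) h1 rfl
      have b2 : ∑ x : ∀ i, X i, νV V x * (gp V x - G V) ^ 2
          ≤ ∑ x : ∀ i, X i, νV V x * g x ^ 2 := by
        have s1 := mean_shift (νV V) (gp V) (G V) h1 (hGgp V)
        have s2 : ∑ x : ∀ i, X i, νV V x * gp V x ^ 2
            = ∑ x : ∀ i, X i, νV V x * g x ^ 2 := by
          refine Finset.sum_congr rfl fun x _ => ?_
          by_cases h : νV V x = 0
          · rw [h, zero_mul, zero_mul]
          · rw [hgp_eq V x (hsupp V x h)]
        rw [s2] at s1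
        exact s1
      have hLε : (0:ℝ) ≤ (L.card : ℝ) * ε := mul_nonneg (Nat.cast_nonneg _) hε
      have hstep : |Cov V| ≤ (L.card : ℝ) * ε *
          Real.sqrt (∑ x : ∀ i, X i, νV V x * f x ^ 2) *
          Real.sqrt (∑ x : ∀ i, X i, νV V x * g x ^ 2) := by
        rw [hassoc]
        refine le_trans happ ?_
        have t1 : Real.sqrt (∑ x : ∀ i, X i, νV V x * (f x - F V) ^ 2)
            ≤ Real.sqrt (∑ x : ∀ i, X i, νV V x * f x ^ 2) := Real.sqrt_le_sqrt b1
        have t2 : Real.sqrt (∑ x : ∀ i, X i, νV V x * (gp V x - G V) ^ 2)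
            ≤ Real.sqrt (∑ x : ∀ i, X i, νV V x * g x ^ 2) := Real.sqrt_le_sqrt b2
        apply mul_le_mul _ t2 (Real.sqrt_nonneg _)
        · exact mul_nonneg hLε (Real.sqrt_nonneg _)
        · exact mul_le_mul_of_nonneg_left t1 hLε
      exact mul_le_mul_of_nonneg_left hstep (hm0 V)
  -- total covariance bound
  have covsum : |∑ V, m V * Cov V| ≤ (L.card : ℝ) * ε * Real.sqrt Ef * Real.sqrt Eg := by
    have hLε : (0:ℝ) ≤ (L.card : ℝ) * ε := mul_nonneg (Nat.cast_nonneg _) hε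
    calc |∑ V, m V * Cov V| ≤ ∑ V, |m V * Cov V| := Finset.abs_sum_le_sum_abs _ _
      _ = ∑ V, m V * |Cov V| := Finset.sum_congr rfl fun V _ => by
          rw [abs_mul, abs_of_nonneg (hm0 V)]
      _ ≤ ∑ V, m V * ((L.card : ℝ) * ε *
            Real.sqrt (∑ x : ∀ i, X i, νV V x * f x ^ 2) *
            Real.sqrt (∑ x : ∀ i, X i, νV V x * g x ^ 2)) :=
          Finset.sum_le_sum fun V _ => covV_bound V
      _ = (L.card : ℝ) * ε * ∑ V, m V *
            (Real.sqrt (∑ x : ∀ i, X i, νV V x * f x ^ 2) *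
             Real.sqrt (∑ x : ∀ i, X i, νV V x * g x ^ 2)) := by
          rw [Finset.mul_sum]
          exact Finset.sum_congr rfl fun V _ => by ring
      _ ≤ (L.card : ℝ) * ε *
            (Real.sqrt (∑ V, m V * ∑ x : ∀ i, X i, νV V x * f x ^ 2) *
             Real.sqrt (∑ V, m V * ∑ x : ∀ i, X i, νV V x * g x ^ 2)) := by
          apply mul_le_mul_of_nonneg_left _ hLε
          have h := wCS_abs m (fun V => Real.sqrt (∑ x : ∀ i, X i, νV V x * f x ^ 2))
            (fun V => Real.sqrt (∑ x : ∀ i, X i, νV V x * g x ^ 2)) hm0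
          have e1 : ∑ V, m V * (Real.sqrt (∑ x : ∀ i, X i, νV V x * f x ^ 2)) ^ 2
              = ∑ V, m V * ∑ x : ∀ i, X i, νV V x * f x ^ 2 :=
            Finset.sum_congr rfl fun V _ => by
              rw [Real.sq_sqrt (Finset.sum_nonneg fun x _ =>
                mul_nonneg (hνV0 V x) (sq_nonneg _))]
          have e2 : ∑ V, m V * (Real.sqrt (∑ x : ∀ i, X i, νV V x * g x ^ 2)) ^ 2
              = ∑ V, m V * ∑ x : ∀ i, X i, νV V x * g x ^ 2 :=
            Finset.sum_congr rfl fun V _ => by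
              rw [Real.sq_sqrt (Finset.sum_nonneg fun x _ =>
                mul_nonneg (hνV0 V x) (sq_nonneg _))]
          rw [e1, e2] at h
          exact le_trans (le_abs_self _) h
      _ = (L.card : ℝ) * ε * Real.sqrt Ef * Real.sqrt Eg := by
          rw [← hEfV, ← hEgV]; ring
  -- main term bound
  set Q := ∑ V, m V * F V ^ 2 with hQ_def
  set QG := ∑ V, m V * G V ^ 2 with hQG_def
  have hQ0 : 0 ≤ Q := Finset.sum_nonneg fun V _ => mul_nonneg (hm0 V) (sq_nonneg _)
  have hQG_le : QG ≤ Eg := by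
    rw [hEgV, hQG_def]
    refine Finset.sum_le_sum fun V _ => ?_
    by_cases hm : m V = 0
    · rw [hm, zero_mul, zero_mul]
    · refine mul_le_mul_of_nonneg_left ?_ (hm0 V)
      have h := wCS_sq (νV V) (fun _ => (1:ℝ)) g (hνV0 V)
      simp only [one_pow, mul_one, one_mul] at h
      rw [hsum1 V hm, one_mul] at h
      exact h
  set Fh : (∀ i, X i) → ℝ := fun x => F (restrict R' x) with hFh_def
  have hFh_pt : ∀ V (x : ∀ i, X i), νV V x * Fh x = νV V x * F V := by
    intro V x
    by_cases h : νV V x = 0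
    · rw [h, zero_mul, zero_mul]
    · rw [hFh_def]; dsimp only; rw [hsupp V x h]
  have hFhJ : Junta R' Fh := fun x y h => congrArg F (funext fun i => h i.1 i.2)
  have hQ_eq1 : ∑ x : ∀ i, X i, ν x * (Fh x * f x) = Q := by
    rw [tA (fun x => Fh x * f x), hQ_def]
    refine Finset.sum_congr rfl fun V _ => ?_
    have e : ∑ x : ∀ i, X i, νV V x * (Fh x * f x)
        = F V * ∑ x : ∀ i, X i, νV V x * f x := by
      rw [Finset.mul_sum]
      refine Finset.sum_congr rfl fun x _ => ?_
      by_cases h : νV V x = 0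
      · rw [h]; ring
      · have h2 : Fh x = F V := by rw [hFh_def]; dsimp only; rw [hsupp V x h]
        rw [show νV V x * (Fh x * f x) = Fh x * (νV V x * f x) from by ring, h2]
    rw [e]
    have hFV : (∑ x : ∀ i, X i, νV V x * f x) = F V := rfl
    rw [hFV]; ring
  have hFh0 : ∑ x : ∀ i, X i, ν x * Fh x = 0 := by
    rw [tA Fh]
    have e : ∀ V, (∑ x : ∀ i, X i, νV V x * Fh x) = ∑ x : ∀ i, X i, νV V x * f x := by
      intro V
      rw [Finset.sum_congr rfl fun x _ => hFh_pt V x]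
      by_cases hm : m V = 0
      · simp [hνVzero V hm]
      · rw [← Finset.sum_mul, hsum1 V hm, one_mul]
    rw [Finset.sum_congr rfl fun V _ => by rw [e V], ← tA f]
    exact hf0
  have hQ_eq2 : ∑ x : ∀ i, X i, ν x * Fh x ^ 2 = Q := by
    rw [tA (fun x => Fh x ^ 2), hQ_def]
    refine Finset.sum_congr rfl fun V _ => ?_
    by_cases hm : m V = 0
    · have hz := hνVzero V hm
      have hF0 : F V = 0 := by simp [hF_def, hz]
      simp [hz, hF0]
    · have e : ∑ x : ∀ i, X i, νV V x * Fh x ^ 2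
          = ∑ x : ∀ i, X i, νV V x * F V ^ 2 := by
        refine Finset.sum_congr rfl fun x _ => ?_
        by_cases h : νV V x = 0
        · rw [h, zero_mul, zero_mul]
        · have h2 : Fh x = F V := by rw [hFh_def]; dsimp only; rw [hsupp V x h]
          rw [h2]
      rw [e, ← Finset.sum_mul, hsum1 V hm, one_mul]
  have happQ := ih S a R' L Fh f (by omega) hR'L hSR' hSL hFhJ hfJ hFh0 hf0
  have e0 : ∑ x : ∀ i, X i, ν x * Fh x * f x = Q := by
    rw [← hQ_eq1]
    exact Finset.sum_congr rfl fun x _ => mul_assoc _ _ _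
  rw [e0, hQ_eq2, ← hEf_def] at happQ
  have hQb : Q ≤ (R'.card : ℝ) * L.card * ε * Real.sqrt Q * Real.sqrt Ef := by
    calc Q = |Q| := (abs_of_nonneg hQ0).symm
      _ ≤ _ := happQ
  have hcQ : (0:ℝ) ≤ (R'.card : ℝ) * (L.card : ℝ) * ε :=
    mul_nonneg (mul_nonneg (Nat.cast_nonneg _) (Nat.cast_nonneg _)) hε
  have sqrtQ : Real.sqrt Q ≤ (R'.card : ℝ) * L.card * ε * Real.sqrt Ef := by
    rcases eq_or_lt_of_le (Real.sqrt_nonneg Q) with h0 | hpos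
    · rw [← h0]
      exact mul_nonneg hcQ (Real.sqrt_nonneg _)
    · have hQQ : Real.sqrt Q * Real.sqrt Q = Q := Real.mul_self_sqrt hQ0
      apply le_of_mul_le_mul_right _ hpos
      calc Real.sqrt Q * Real.sqrt Q = Q := hQQ
        _ ≤ (R'.card : ℝ) * L.card * ε * Real.sqrt Q * Real.sqrt Ef := hQb
        _ = (R'.card : ℝ) * L.card * ε * Real.sqrt Ef * Real.sqrt Q := by ring
  have main_abs : |∑ V, m V * (F V * G V)| ≤ Real.sqrt Q * Real.sqrt QG := by
    have h := wCS_abs m F G hm0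
    rw [← hQ_def, ← hQG_def] at h
    exact h
  -- final assembly
  have habs : ∑ x : ∀ i, X i, ν x * f x * g x
      = (∑ V, m V * (F V * G V)) + ∑ V, m V * Cov V := by
    rw [← decomp]
    exact Finset.sum_congr rfl fun x _ => mul_assoc _ _ _
  rw [habs]
  have hRE : (R'.card : ℝ) + 1 = (R.card : ℝ) := by exact_mod_cast hR'card1
  calc |(∑ V, m V * (F V * G V)) + ∑ V, m V * Cov V|
      ≤ |∑ V, m V * (F V * G V)| + |∑ V, m V * Cov V| := abs_add_le _ _
    _ ≤ Real.sqrt Q * Real.sqrt QG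
        + (L.card : ℝ) * ε * Real.sqrt Ef * Real.sqrt Eg := add_le_add main_abs covsum
    _ ≤ ((R'.card : ℝ) * L.card * ε * Real.sqrt Ef) * Real.sqrt Eg
        + (L.card : ℝ) * ε * Real.sqrt Ef * Real.sqrt Eg := by
        refine add_le_add ?_ le_rfl
        exact mul_le_mul sqrtQ (Real.sqrt_le_sqrt hQG_le) (Real.sqrt_nonneg _)
          (mul_nonneg hcQ (Real.sqrt_nonneg _))
    _ = (L.card : ℝ) * R.card * ε * Real.sqrt Ef * Real.sqrt Eg := by
        rw [← hRE]; ring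
end Step

section Key

variable {r : ℕ} {X : Fin r → Type} [∀ i, Fintype (X i)]

lemma corr_key (μ : (∀ i, X i) → ℝ) (hμ0 : ∀ x, 0 ≤ μ x) (ε : ℝ) (hε : 0 ≤ ε)
    (hprod : IsEpsProduct X μ ε) :
    ∀ (n : ℕ) (S : Finset (Fin r)) (a : ∀ i : S, X i.1) (L R : Finset (Fin r))
      (f g : (∀ i, X i) → ℝ), L.card + R.card ≤ n → Disjoint L R → Disjoint S L →
      Disjoint S R → Junta L f → Junta R g →
      (∑ x : ∀ i, X i, condDist μ S a x * f x) = 0 →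
      (∑ x : ∀ i, X i, condDist μ S a x * g x) = 0 →
      |∑ x : ∀ i, X i, condDist μ S a x * f x * g x| ≤
        (L.card : ℝ) * R.card * ε *
          Real.sqrt (∑ x : ∀ i, X i, condDist μ S a x * f x ^ 2) *
          Real.sqrt (∑ x : ∀ i, X i, condDist μ S a x * g x ^ 2) := by
  intro n
  induction n with
  | zero =>
    intro S a L R f g hcard hLR hSL hSR hfJ hgJ hf0 hg0
    have hL : L = ∅ := Finset.card_eq_zero.mp (by omega)
    refine corr_triv _ _ ?_ f g
      (Or.inl fun x y => hfJ x y (fun i hi => absurd (hL ▸ hi) (Finset.notMem_empty i)))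
      hf0 hg0
    exact mul_nonneg (mul_nonneg (Nat.cast_nonneg _) (Nat.cast_nonneg _)) hε
  | succ n ihn =>
    intro S a L R f g hcard hLR hSL hSR hfJ hgJ hf0 hg0
    by_cases hL0 : L = ∅
    · refine corr_triv _ _ ?_ f g
        (Or.inl fun x y => hfJ x y (fun i hi => absurd (hL0 ▸ hi) (Finset.notMem_empty i)))
        hf0 hg0
      exact mul_nonneg (mul_nonneg (Nat.cast_nonneg _) (Nat.cast_nonneg _)) hε
    by_cases hR0 : R = ∅
    · refine corr_triv _ _ ?_ f g
        (Or.inr fun x y => hgJ x y (fun i hi => absurd (hR0 ▸ hi) (Finset.notMem_empty i)))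
        hf0 hg0
      exact mul_nonneg (mul_nonneg (Nat.cast_nonneg _) (Nat.cast_nonneg _)) hε
    have hL1 : 1 ≤ L.card := Finset.card_pos.mpr (Finset.nonempty_iff_ne_empty.mpr hL0)
    have hR1 : 1 ≤ R.card := Finset.card_pos.mpr (Finset.nonempty_iff_ne_empty.mpr hR0)
    by_cases hR2 : 2 ≤ R.card
    · exact corr_step μ hμ0 ε hε n ihn S a L R f g hcard hR2 hLR hSL hSR hfJ hgJ hf0 hg0
    by_cases hL2 : 2 ≤ L.card
    · have h := corr_step μ hμ0 ε hε n ihn S a R L g f (by omega) hL2 hLR.symm hSR hSL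
        hgJ hfJ hg0 hf0
      have e : ∑ x : ∀ i, X i, condDist μ S a x * g x * f x
          = ∑ x : ∀ i, X i, condDist μ S a x * f x * g x :=
        Finset.sum_congr rfl fun x _ => by ring
      rw [e] at h
      calc |∑ x : ∀ i, X i, condDist μ S a x * f x * g x|
          ≤ (R.card : ℝ) * L.card * ε *
            Real.sqrt (∑ x : ∀ i, X i, condDist μ S a x * g x ^ 2) *
            Real.sqrt (∑ x : ∀ i, X i, condDist μ S a x * f x ^ 2) := h
        _ = _ := by ring
    -- base case : L.card = 1 and R.card = 1
    have hLc : L.card = 1 := by omega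
    have hRc : R.card = 1 := by omega
    obtain ⟨i, hi⟩ := Finset.card_eq_one.mp hLc
    obtain ⟨j, hjj⟩ := Finset.card_eq_one.mp hRc
    subst hi hjj
    by_cases hm : marg μ S a = 0
    · have hz : ∀ x, condDist μ S a x = 0 := condDist_zero_of_marg hm
      have z1 : ∑ x : ∀ i, X i, condDist μ S a x * f x * g x = 0 :=
        Finset.sum_eq_zero fun x _ => by rw [hz x]; ring
      have z2 : ∑ x : ∀ i, X i, condDist μ S a x * f x ^ 2 = 0 :=
        Finset.sum_eq_zero fun x _ => by rw [hz x]; ring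
      have z3 : ∑ x : ∀ i, X i, condDist μ S a x * g x ^ 2 = 0 :=
        Finset.sum_eq_zero fun x _ => by rw [hz x]; ring
      rw [z1, z2, z3, abs_zero, Real.sqrt_zero, mul_zero]
    rcases isEmpty_or_nonempty (∀ i, X i) with hE | hNE
    · simp only [Finset.univ_eq_empty, Finset.sum_empty, abs_zero, Real.sqrt_zero, mul_zero]
      exact le_rfl
    · have hScard : S.card ≤ r - 2 := by
        have hsub : S ⊆ Finset.univ \ ({i} ∪ {j}) := by
          intro s hs
          rw [Finset.mem_sdiff]
          refine ⟨Finset.mem_univ s, ?_⟩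
          rw [Finset.mem_union, Finset.mem_singleton, Finset.mem_singleton]
          rintro (h | h) <;> subst h
          · exact Finset.disjoint_right.mp hSL (Finset.mem_singleton_self s) hs
          · exact Finset.disjoint_right.mp hSR (Finset.mem_singleton_self s) hs
        have hcard2 : (({i} : Finset (Fin r)) ∪ {j}).card = 2 := by
          rw [Finset.card_union_of_disjoint hLR]
          simp
        have := Finset.card_le_card hsub
        rw [Finset.card_sdiff_of_subset (Finset.subset_univ _), hcard2, Finset.card_univ,
          Fintype.card_fin] at this
        exact this
      have hij : i ≠ j := by
        intro h
        subst h
        exact Finset.disjoint_left.mp hLR (Finset.mem_singleton_self i)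
          (Finset.mem_singleton_self i)
      have hiS : i ∉ S := Finset.disjoint_right.mp hSL (Finset.mem_singleton_self i)
      have hjS : j ∉ S := Finset.disjoint_right.mp hSR (Finset.mem_singleton_self j)
      have hpr := hprod S hScard a hm i j hiS hjS hij
      have x₀ : ∀ i, X i := Classical.arbitrary _
      set f1 : X i → ℝ := fun b => f (Function.update x₀ i b) with hf1_def
      set g1 : X j → ℝ := fun b => g (Function.update x₀ j b) with hg1_def
      have hf1 : ∀ x : ∀ i, X i, f x = f1 (x i) := by
        intro x
        apply hfJ
        intro k hk
        rw [Finset.mem_singleton] at hk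
        subst hk
        exact (Function.update_self k (x k) x₀).symm
      have hg1 : ∀ x : ∀ i, X i, g x = g1 (x j) := by
        intro x
        apply hgJ
        intro k hk
        rw [Finset.mem_singleton] at hk
        subst hk
        exact (Function.update_self k (x k) x₀).symm
      have hf0' : (∑ᶠ x : ∀ i, X i, condDist μ S a x * f1 (x i)) = 0 := by
        rw [finsum_eq_sum_of_fintype]
        have e : ∑ x : ∀ i, X i, condDist μ S a x * f1 (x i)
            = ∑ x : ∀ i, X i, condDist μ S a x * f x :=
          Finset.sum_congr rfl fun x _ => by rw [← hf1 x]
        rw [e]; exact hf0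
      have hg0' : (∑ᶠ x : ∀ i, X i, condDist μ S a x * g1 (x j)) = 0 := by
        rw [finsum_eq_sum_of_fintype]
        have e : ∑ x : ∀ i, X i, condDist μ S a x * g1 (x j)
            = ∑ x : ∀ i, X i, condDist μ S a x * g x :=
          Finset.sum_congr rfl fun x _ => by rw [← hg1 x]
        rw [e]; exact hg0
      have key := hpr f1 g1 hf0' hg0'
      rw [finsum_eq_sum_of_fintype, finsum_eq_sum_of_fintype, finsum_eq_sum_of_fintype] at key
      have e1 : ∑ x : ∀ i, X i, condDist μ S a x * f1 (x i) * g1 (x j)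
          = ∑ x : ∀ i, X i, condDist μ S a x * f x * g x :=
        Finset.sum_congr rfl fun x _ => by rw [← hf1 x, ← hg1 x]
      have e2 : ∑ x : ∀ i, X i, condDist μ S a x * f1 (x i) ^ 2
          = ∑ x : ∀ i, X i, condDist μ S a x * f x ^ 2 :=
        Finset.sum_congr rfl fun x _ => by rw [← hf1 x]
      have e3 : ∑ x : ∀ i, X i, condDist μ S a x * g1 (x j) ^ 2
          = ∑ x : ∀ i, X i, condDist μ S a x * g x ^ 2 :=
        Finset.sum_congr rfl fun x _ => by rw [← hg1 x]
      rw [e1, e2, e3] at key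
      simp only [Finset.card_singleton, Nat.cast_one, one_mul]
      exact key

end Key

section Final

variable {r : ℕ} {X : Fin r → Type} [∀ i, Fintype (X i)]

lemma condDist_empty (μ : (∀ i, X i) → ℝ) (hμ1 : ∑ x : ∀ i, X i, μ x = 1)
    (a : ∀ i : (∅ : Finset (Fin r)), X i.1) : condDist μ ∅ a = μ := by
  have hres : ∀ x : ∀ i, X i, restrict (∅ : Finset (Fin r)) x = a :=
    fun x => funext fun i => absurd i.2 (Finset.notMem_empty i.1)
  have hmarg : marg μ ∅ a = 1 := by
    rw [marg_eq_sum, Finset.sum_congr rfl fun x _ => if_pos (hres x)]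
    exact hμ1
  funext x
  unfold condDist
  rw [if_pos (hres x), hmarg, div_one]

end Final

set_option maxHeartbeats 1000000 in
/-- There is `C > 0` such that: if `μ` is an `ε`-product
distribution over `X_1 × ⋯ × X_r` and `S_1, S_2, S_3 ⊆ [r]` are disjoint nonempty
sets, then the second largest singular value of the normalized adjacency operator
of the tripartite graph `T(S_1, S_2, S_3; μ)` is at most `1/2 + poly(r)·ε`,
expressed as a bilinear bound over mean-zero functions `F, G` on the vertex set
`Σ k, supp(μ^{S_k})` (with stationary measure `(1/3)·marginal`, and edge
distribution sampling `x ∼ μ` and a uniform ordered pair `k ≠ l`). -/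
theorem stmt5 : ∃ C : ℝ, 0 < C ∧
    ∀ (r : ℕ) (X : Fin r → Type) [∀ i, Fintype (X i)]
      (μ : (∀ i, X i) → ℝ), (∀ x, 0 ≤ μ x) → (∑ᶠ x : ∀ i, X i, μ x) = 1 →
      ∀ ε : ℝ, 0 ≤ ε → IsEpsProduct X μ ε →
      ∀ S : Fin 3 → Finset (Fin r),
        (∀ k l, k ≠ l → Disjoint (S k) (S l)) → (∀ k, (S k).Nonempty) →
      ∀ F G : (Σ k : Fin 3, ∀ i : S k, X i.1) → ℝ,
        (∑ᶠ x : ∀ i, X i, μ x * ∑ k : Fin 3, F ⟨k, restrict (S k) x⟩) = 0 →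
        (∑ᶠ x : ∀ i, X i, μ x * ∑ k : Fin 3, G ⟨k, restrict (S k) x⟩) = 0 →
        |(1 / 6 : ℝ) * ∑ᶠ x : ∀ i, X i, μ x * ∑ k : Fin 3, ∑ l : Fin 3,
            (if k ≠ l then F ⟨k, restrict (S k) x⟩ * G ⟨l, restrict (S l) x⟩
              else 0)| ≤
          (1 / 2 + C * (r : ℝ) ^ C * ε) *
            Real.sqrt ((1 / 3 : ℝ) *
              ∑ᶠ x : ∀ i, X i, μ x * ∑ k : Fin 3, (F ⟨k, restrict (S k) x⟩) ^ 2) *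
            Real.sqrt ((1 / 3 : ℝ) *
              ∑ᶠ x : ∀ i, X i, μ x * ∑ k : Fin 3, (G ⟨k, restrict (S k) x⟩) ^ 2) := by
  refine ⟨2, by norm_num, ?_⟩
  intro r X instX μ hμ0 hμ1f ε hε hprod S hdisj hne F G hF0f hG0f
  rw [finsum_eq_sum_of_fintype] at hμ1f hF0f hG0f
  rw [finsum_eq_sum_of_fintype, finsum_eq_sum_of_fintype, finsum_eq_sum_of_fintype]
  set fk : Fin 3 → (∀ i, X i) → ℝ := fun k x => F ⟨k, restrict (S k) x⟩ with hfk_def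
  set gk : Fin 3 → (∀ i, X i) → ℝ := fun k x => G ⟨k, restrict (S k) x⟩ with hgk_def
  have hswap : ∀ H : Fin 3 → (∀ i, X i) → ℝ,
      ∑ x : ∀ i, X i, μ x * ∑ k : Fin 3, H k x
        = ∑ k : Fin 3, ∑ x : ∀ i, X i, μ x * H k x := by
    intro H
    rw [Finset.sum_congr rfl fun x _ => Finset.mul_sum Finset.univ (fun k => H k x) (μ x)]
    exact Finset.sum_comm
  set a : Fin 3 → ℝ := fun k => ∑ x : ∀ i, X i, μ x * fk k x with ha_def
  set b : Fin 3 → ℝ := fun k => ∑ x : ∀ i, X i, μ x * gk k x with hb_def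
  set Ef2 : Fin 3 → ℝ := fun k => ∑ x : ∀ i, X i, μ x * fk k x ^ 2 with hEf2_def
  set Eg2 : Fin 3 → ℝ := fun k => ∑ x : ∀ i, X i, μ x * gk k x ^ 2 with hEg2_def
  have hEf2_0 : ∀ k, 0 ≤ Ef2 k := fun k =>
    Finset.sum_nonneg fun x _ => mul_nonneg (hμ0 x) (sq_nonneg _)
  have hEg2_0 : ∀ k, 0 ≤ Eg2 k := fun k =>
    Finset.sum_nonneg fun x _ => mul_nonneg (hμ0 x) (sq_nonneg _)
  have hsumA : ∑ k : Fin 3, a k = 0 := by rw [← hswap fk]; exact hF0f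
  have hsumB : ∑ k : Fin 3, b k = 0 := by rw [← hswap gk]; exact hG0f
  set A2 := ∑ k : Fin 3, Ef2 k with hA2_def
  set B2 := ∑ k : Fin 3, Eg2 k with hB2_def
  have hA2_0 : 0 ≤ A2 := Finset.sum_nonneg fun k _ => hEf2_0 k
  have hB2_0 : 0 ≤ B2 := Finset.sum_nonneg fun k _ => hEg2_0 k
  have hA2e : ∑ x : ∀ i, X i, μ x * ∑ k : Fin 3, fk k x ^ 2 = A2 :=
    hswap (fun k x => fk k x ^ 2)
  have hB2e : ∑ x : ∀ i, X i, μ x * ∑ k : Fin 3, gk k x ^ 2 = B2 :=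
    hswap (fun k x => gk k x ^ 2)
  -- card bound
  have hcard_le : ∀ k, ((S k).card : ℝ) ≤ (r : ℝ) := by
    intro k
    have := Finset.card_le_univ (S k)
    rw [Fintype.card_fin] at this
    exact_mod_cast this
  have hr0 : (0:ℝ) ≤ (r:ℝ) := Nat.cast_nonneg r
  -- empty assignment
  set e0 : ∀ i : (∅ : Finset (Fin r)), X i.1 :=
    fun i => absurd i.2 (Finset.notMem_empty i.1) with he0_def
  have hce : condDist μ (∅ : Finset (Fin r)) e0 = μ := condDist_empty μ hμ1f e0
  -- covariance terms
  set c : Fin 3 → Fin 3 → ℝ := fun k l =>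
    ∑ x : ∀ i, X i, μ x * ((fk k x - a k) * (gk l x - b l)) with hc_def
  have hdecomp : ∀ k l, ∑ x : ∀ i, X i, μ x * (fk k x * gk l x) = a k * b l + c k l :=
    fun k l => cov_decomp μ (fk k) (gk l) (a k) (b l) hμ1f rfl rfl
  have hcov : ∀ k l, k ≠ l →
      |c k l| ≤ (r:ℝ) * (r:ℝ) * ε * Real.sqrt (Ef2 k) * Real.sqrt (Eg2 l) := by
    intro k l hkl
    have hJf : Junta (S k) (fun x => fk k x - a k) := by
      intro x y h
      dsimp only
      rw [hfk_def]
      dsimp only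
      rw [show restrict (S k) x = restrict (S k) y from funext fun i => h i.1 i.2]
    have hJg : Junta (S l) (fun x => gk l x - b l) := by
      intro x y h
      dsimp only
      rw [hgk_def]
      dsimp only
      rw [show restrict (S l) x = restrict (S l) y from funext fun i => h i.1 i.2]
    have hm0 : ∑ x : ∀ i, X i, condDist μ ∅ e0 x * (fk k x - a k) = 0 := by
      rw [hce]
      have e : ∀ x : ∀ i, X i, μ x * (fk k x - a k) = μ x * fk k x - a k * μ x :=
        fun x => by ring
      rw [Finset.sum_congr rfl fun x _ => e x, Finset.sum_sub_distrib, ← Finset.mul_sum,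
        hμ1f, mul_one]
      exact sub_self (a k)
    have hm0' : ∑ x : ∀ i, X i, condDist μ ∅ e0 x * (gk l x - b l) = 0 := by
      rw [hce]
      have e : ∀ x : ∀ i, X i, μ x * (gk l x - b l) = μ x * gk l x - b l * μ x :=
        fun x => by ring
      rw [Finset.sum_congr rfl fun x _ => e x, Finset.sum_sub_distrib, ← Finset.mul_sum,
        hμ1f, mul_one]
      exact sub_self (b l)
    have happ := corr_key μ hμ0 ε hε hprod ((S k).card + (S l).card) ∅ e0 (S k) (S l)
      (fun x => fk k x - a k) (fun x => gk l x - b l) le_rfl (hdisj k l hkl)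
      (Finset.disjoint_empty_left _) (Finset.disjoint_empty_left _) hJf hJg hm0 hm0'
    rw [hce] at happ
    have eassoc : ∑ x : ∀ i, X i, μ x * (fk k x - a k) * (gk l x - b l) = c k l := by
      rw [hc_def]
      exact Finset.sum_congr rfl fun x _ => mul_assoc _ _ _
    rw [eassoc] at happ
    have t1 : Real.sqrt (∑ x : ∀ i, X i, μ x * (fk k x - a k) ^ 2)
        ≤ Real.sqrt (Ef2 k) :=
      Real.sqrt_le_sqrt (mean_shift μ (fk k) (a k) hμ1f rfl)
    have t2 : Real.sqrt (∑ x : ∀ i, X i, μ x * (gk l x - b l) ^ 2)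
        ≤ Real.sqrt (Eg2 l) :=
      Real.sqrt_le_sqrt (mean_shift μ (gk l) (b l) hμ1f rfl)
    have hcc : ((S k).card : ℝ) * ((S l).card : ℝ) * ε ≤ (r:ℝ) * (r:ℝ) * ε := by
      apply mul_le_mul_of_nonneg_right _ hε
      exact mul_le_mul (hcard_le k) (hcard_le l) (Nat.cast_nonneg _) hr0
    have hccn : (0:ℝ) ≤ ((S k).card : ℝ) * ((S l).card : ℝ) * ε :=
      mul_nonneg (mul_nonneg (Nat.cast_nonneg _) (Nat.cast_nonneg _)) hε
    refine le_trans happ ?_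
    apply mul_le_mul _ t2 (Real.sqrt_nonneg _)
      (mul_nonneg (mul_nonneg (mul_nonneg hr0 hr0) hε) (Real.sqrt_nonneg _))
    apply mul_le_mul _ t1 (Real.sqrt_nonneg _) (mul_nonneg (mul_nonneg hr0 hr0) hε)
    exact hcc
  -- rearrange the main sum
  set T := ∑ x : ∀ i, X i, μ x * ∑ k : Fin 3, ∑ l : Fin 3,
      (if k ≠ l then fk k x * gk l x else 0) with hT_def
  have hT : T = ∑ k : Fin 3, ∑ l : Fin 3,
      (if k ≠ l then a k * b l + c k l else 0) := by
    rw [hT_def, hswap (fun k x => ∑ l : Fin 3, (if k ≠ l then fk k x * gk l x else 0))]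
    refine Finset.sum_congr rfl fun k _ => ?_
    rw [hswap (fun l x => if k ≠ l then fk k x * gk l x else 0)]
    refine Finset.sum_congr rfl fun l _ => ?_
    by_cases hkl : k ≠ l
    · simp only [if_pos hkl]
      rw [← hdecomp k l]
    · simp only [if_neg hkl, mul_zero, Finset.sum_const_zero]
  have hsplit : T = (∑ k : Fin 3, ∑ l : Fin 3, (if k ≠ l then a k * b l else 0))
      + ∑ k : Fin 3, ∑ l : Fin 3, (if k ≠ l then c k l else 0) := by
    rw [hT, ← Finset.sum_add_distrib]
    refine Finset.sum_congr rfl fun k _ => ?_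
    rw [← Finset.sum_add_distrib]
    refine Finset.sum_congr rfl fun l _ => ?_
    by_cases hkl : k ≠ l <;> simp [hkl]
  have hM1 : ∑ k : Fin 3, ∑ l : Fin 3, (if k ≠ l then a k * b l else 0)
      = - ∑ k : Fin 3, a k * b k := by
    have e1 : ∀ k : Fin 3, ∑ l : Fin 3, (if k ≠ l then a k * b l else 0)
        = a k * (∑ l : Fin 3, b l) - a k * b k := by
      intro k
      have e2 : ∀ l : Fin 3, (if k ≠ l then a k * b l else 0)
          = a k * b l - (if k = l then a k * b l else 0) := by
        intro l
        by_cases hkl : k = l <;> simp [hkl]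
      rw [Finset.sum_congr rfl fun l _ => e2 l, Finset.sum_sub_distrib, ← Finset.mul_sum]
      congr 1
      simp
    rw [Finset.sum_congr rfl fun k _ => e1 k, Finset.sum_sub_distrib, ← Finset.sum_mul,
      hsumA, zero_mul, zero_sub]
  have habk : |∑ k : Fin 3, a k * b k| ≤ Real.sqrt A2 * Real.sqrt B2 := by
    have h := wCS_abs (fun _ : Fin 3 => (1:ℝ)) a b (fun _ => zero_le_one)
    simp only [one_mul] at h
    refine le_trans h ?_
    have ha2 : ∀ k : Fin 3, a k ^ 2 ≤ Ef2 k := by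
      intro k
      have h2 := wCS_sq μ (fk k) (fun _ => (1:ℝ)) hμ0
      simp only [mul_one, one_pow] at h2
      rw [hμ1f, mul_one] at h2
      exact h2
    have hb2 : ∀ k : Fin 3, b k ^ 2 ≤ Eg2 k := by
      intro k
      have h2 := wCS_sq μ (gk k) (fun _ => (1:ℝ)) hμ0
      simp only [mul_one, one_pow] at h2
      rw [hμ1f, mul_one] at h2
      exact h2
    apply mul_le_mul (Real.sqrt_le_sqrt (Finset.sum_le_sum fun k _ => ha2 k))
      (Real.sqrt_le_sqrt (Finset.sum_le_sum fun k _ => hb2 k)) (Real.sqrt_nonneg _)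
      (Real.sqrt_nonneg _)
  have hsf : ∑ k : Fin 3, Real.sqrt (Ef2 k) ≤ Real.sqrt 3 * Real.sqrt A2 := by
    have h := wCS_sq (fun _ : Fin 3 => (1:ℝ)) (fun _ => (1:ℝ))
      (fun k => Real.sqrt (Ef2 k)) (fun _ => zero_le_one)
    simp only [one_mul, one_pow] at h
    have e : ∑ k : Fin 3, Real.sqrt (Ef2 k) ^ 2 = A2 :=
      Finset.sum_congr rfl fun k _ => Real.sq_sqrt (hEf2_0 k)
    rw [e] at h
    have h3 : (∑ _k : Fin 3, (1:ℝ)) = 3 := by simp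
    rw [h3] at h
    have hnn : 0 ≤ ∑ k : Fin 3, Real.sqrt (Ef2 k) :=
      Finset.sum_nonneg fun k _ => Real.sqrt_nonneg _
    calc ∑ k : Fin 3, Real.sqrt (Ef2 k)
        = Real.sqrt ((∑ k : Fin 3, Real.sqrt (Ef2 k)) ^ 2) := by
          rw [Real.sqrt_sq hnn]
      _ ≤ Real.sqrt (3 * A2) := Real.sqrt_le_sqrt h
      _ = Real.sqrt 3 * Real.sqrt A2 := Real.sqrt_mul (by norm_num) _
  have hsg : ∑ k : Fin 3, Real.sqrt (Eg2 k) ≤ Real.sqrt 3 * Real.sqrt B2 := by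
    have h := wCS_sq (fun _ : Fin 3 => (1:ℝ)) (fun _ => (1:ℝ))
      (fun k => Real.sqrt (Eg2 k)) (fun _ => zero_le_one)
    simp only [one_mul, one_pow] at h
    have e : ∑ k : Fin 3, Real.sqrt (Eg2 k) ^ 2 = B2 :=
      Finset.sum_congr rfl fun k _ => Real.sq_sqrt (hEg2_0 k)
    rw [e] at h
    have h3 : (∑ _k : Fin 3, (1:ℝ)) = 3 := by simp
    rw [h3] at h
    have hnn : 0 ≤ ∑ k : Fin 3, Real.sqrt (Eg2 k) :=
      Finset.sum_nonneg fun k _ => Real.sqrt_nonneg _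
    calc ∑ k : Fin 3, Real.sqrt (Eg2 k)
        = Real.sqrt ((∑ k : Fin 3, Real.sqrt (Eg2 k)) ^ 2) := by
          rw [Real.sqrt_sq hnn]
      _ ≤ Real.sqrt (3 * B2) := Real.sqrt_le_sqrt h
      _ = Real.sqrt 3 * Real.sqrt B2 := Real.sqrt_mul (by norm_num) _
  have hM2 : |∑ k : Fin 3, ∑ l : Fin 3, (if k ≠ l then c k l else 0)|
      ≤ (r:ℝ) * (r:ℝ) * ε * ((Real.sqrt 3 * Real.sqrt A2) * (Real.sqrt 3 * Real.sqrt B2)) := by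
    have step : ∀ k l : Fin 3, |if k ≠ l then c k l else 0|
        ≤ (r:ℝ) * (r:ℝ) * ε * (Real.sqrt (Ef2 k) * Real.sqrt (Eg2 l)) := by
      intro k l
      by_cases hkl : k ≠ l
      · rw [if_pos hkl]
        refine le_trans (hcov k l hkl) (le_of_eq ?_)
        ring
      · rw [if_neg hkl, abs_zero]
        exact mul_nonneg (mul_nonneg (mul_nonneg hr0 hr0) hε)
          (mul_nonneg (Real.sqrt_nonneg _) (Real.sqrt_nonneg _))
    calc |∑ k : Fin 3, ∑ l : Fin 3, (if k ≠ l then c k l else 0)|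
        ≤ ∑ k : Fin 3, |∑ l : Fin 3, (if k ≠ l then c k l else 0)| :=
          Finset.abs_sum_le_sum_abs _ _
      _ ≤ ∑ k : Fin 3, ∑ l : Fin 3, |if k ≠ l then c k l else 0| :=
          Finset.sum_le_sum fun k _ => Finset.abs_sum_le_sum_abs _ _
      _ ≤ ∑ k : Fin 3, ∑ l : Fin 3,
            (r:ℝ) * (r:ℝ) * ε * (Real.sqrt (Ef2 k) * Real.sqrt (Eg2 l)) :=
          Finset.sum_le_sum fun k _ => Finset.sum_le_sum fun l _ => step k l
      _ = (r:ℝ) * (r:ℝ) * ε *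
            ((∑ k : Fin 3, Real.sqrt (Ef2 k)) * (∑ l : Fin 3, Real.sqrt (Eg2 l))) := by
          have e1 : ∀ k : Fin 3, ∑ l : Fin 3,
              (r:ℝ) * (r:ℝ) * ε * (Real.sqrt (Ef2 k) * Real.sqrt (Eg2 l))
              = (r:ℝ) * (r:ℝ) * ε * Real.sqrt (Ef2 k) * ∑ l : Fin 3, Real.sqrt (Eg2 l) := by
            intro k
            rw [Finset.mul_sum]
            exact Finset.sum_congr rfl fun l _ => by ring
          rw [Finset.sum_congr rfl fun k _ => e1 k, ← Finset.sum_mul, ← Finset.mul_sum]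
          ring
      _ ≤ (r:ℝ) * (r:ℝ) * ε *
            ((Real.sqrt 3 * Real.sqrt A2) * (Real.sqrt 3 * Real.sqrt B2)) := by
          apply mul_le_mul_of_nonneg_left _ (mul_nonneg (mul_nonneg hr0 hr0) hε)
          exact mul_le_mul hsf hsg
            (Finset.sum_nonneg fun k _ => Real.sqrt_nonneg _)
            (mul_nonneg (Real.sqrt_nonneg _) (Real.sqrt_nonneg _))
  -- put it together
  have hTbound : |T| ≤ (1 + 3 * ((r:ℝ) * (r:ℝ) * ε)) * (Real.sqrt A2 * Real.sqrt B2) := by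
    rw [hsplit]
    have h3 : Real.sqrt 3 * Real.sqrt 3 = 3 := Real.mul_self_sqrt (by norm_num)
    calc |(∑ k : Fin 3, ∑ l : Fin 3, (if k ≠ l then a k * b l else 0))
        + ∑ k : Fin 3, ∑ l : Fin 3, (if k ≠ l then c k l else 0)|
        ≤ |∑ k : Fin 3, ∑ l : Fin 3, (if k ≠ l then a k * b l else 0)|
          + |∑ k : Fin 3, ∑ l : Fin 3, (if k ≠ l then c k l else 0)| := abs_add_le _ _
      _ ≤ Real.sqrt A2 * Real.sqrt B2
          + (r:ℝ) * (r:ℝ) * ε * ((Real.sqrt 3 * Real.sqrt A2) * (Real.sqrt 3 * Real.sqrt B2)) := by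
          refine add_le_add ?_ hM2
          rw [hM1, abs_neg]
          exact habk
      _ = (1 + 3 * ((r:ℝ) * (r:ℝ) * ε)) * (Real.sqrt A2 * Real.sqrt B2) := by
          rw [show (Real.sqrt 3 * Real.sqrt A2) * (Real.sqrt 3 * Real.sqrt B2)
            = (Real.sqrt 3 * Real.sqrt 3) * (Real.sqrt A2 * Real.sqrt B2) from by ring, h3]
          ring
  -- final numeric step
  rw [hA2e, hB2e]
  have hr2 : (r:ℝ) ^ (2:ℝ) = (r:ℝ) * (r:ℝ) := by
    rw [show (2:ℝ) = ((2:ℕ):ℝ) by norm_num, Real.rpow_natCast]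
    ring
  rw [hr2]
  rw [Real.sqrt_mul (by norm_num : (0:ℝ) ≤ 1/3) A2, Real.sqrt_mul (by norm_num : (0:ℝ) ≤ 1/3) B2]
  rw [abs_mul, show |(1/6 : ℝ)| = 1/6 by norm_num]
  have h13 : Real.sqrt (1/3) * Real.sqrt (1/3) = 1/3 := Real.mul_self_sqrt (by norm_num)
  have hP0 : 0 ≤ Real.sqrt A2 * Real.sqrt B2 :=
    mul_nonneg (Real.sqrt_nonneg _) (Real.sqrt_nonneg _)
  have ht0 : 0 ≤ (r:ℝ) * (r:ℝ) * ε := mul_nonneg (mul_nonneg hr0 hr0) hε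
  have hgoal : (1/2 + 2 * ((r:ℝ) * (r:ℝ)) * ε) * (Real.sqrt (1/3) * Real.sqrt A2)
      * (Real.sqrt (1/3) * Real.sqrt B2)
      = (1/2 + 2 * ((r:ℝ) * (r:ℝ)) * ε) * (1/3) * (Real.sqrt A2 * Real.sqrt B2) := by
    rw [show (1/2 + 2 * ((r:ℝ) * (r:ℝ)) * ε) * (Real.sqrt (1/3) * Real.sqrt A2)
      * (Real.sqrt (1/3) * Real.sqrt B2)
      = (1/2 + 2 * ((r:ℝ) * (r:ℝ)) * ε) * (Real.sqrt (1/3) * Real.sqrt (1/3))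
        * (Real.sqrt A2 * Real.sqrt B2) from by ring, h13]
  rw [hgoal]
  have hTb := hTbound
  nlinarith [hTb, abs_nonneg T, hP0, ht0, mul_nonneg ht0 hP0]
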